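/- Let t be a real number with t ≠ 1 and let A_n(t) denote the n-th derivative at x = 0 of the function x ↦ (1-t)/(e^{x(t-1)} - t). Then the Eulerian recurrence holds: for every n ∈ ℕ, Σ_{l=0}^{n} binom(n,l) · A_l(t) · (t-1)^{n-l} - t·A_n(t) equals 1-t if n = 0 and equals 0 if n ≥ 1. -/

import Mathlib

open Finset Filter Topology

private lemma iterSmooth {f : ℝ → ℝ} {s : Set ℝ} (hs : IsOpen s)
    (hf : ContDiffOn ℝ ⊤ f s) : ∀ n, ContDiffOn ℝ ⊤ (iteratedDeriv n f) s := by
  intro n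
  induction n with
  | zero => simpa using hf
  | succ n ih =>
    have : iteratedDeriv (n + 1) f = deriv (iteratedDeriv n f) := by
      funext x; rw [iteratedDeriv_succ]
    rw [this]
    exact ih.deriv_of_isOpen hs le_top

private lemma iterDiffAt {f : ℝ → ℝ} {s : Set ℝ} (hs : IsOpen s)
    (hf : ContDiffOn ℝ ⊤ f s) (n : ℕ) {x : ℝ} (hx : x ∈ s) :
    DifferentiableAt ℝ (iteratedDeriv n f) x :=
  ((iterSmooth hs hf n).differentiableOn (by simp)).differentiableAt (hs.mem_nhds hx)

private lemma pascal_sum (k : ℝ) (u : ℕ → ℝ) (n : ℕ) :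
    ∑ l ∈ range (n + 2), ((n+1).choose l : ℝ) * u l * k ^ (n + 1 - l)
      = ∑ l ∈ range (n + 1), (n.choose l : ℝ) * u (l + 1) * k ^ (n - l)
        + (∑ l ∈ range (n + 1), (n.choose l : ℝ) * u l * k ^ (n - l)) * k := by
  have h1 : ∑ l ∈ range (n + 2), (n.choose l : ℝ) * u l * k ^ (n + 1 - l)
      = (∑ l ∈ range (n + 1), (n.choose l : ℝ) * u l * k ^ (n - l)) * k := by
    rw [Finset.sum_range_succ, Nat.choose_succ_self, Finset.sum_mul]
    push_cast
    rw [zero_mul, zero_mul, add_zero]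
    refine Finset.sum_congr rfl fun l hl => ?_
    have h : n + 1 - l = (n - l) + 1 := by
      have := Nat.lt_succ_iff.mp (Finset.mem_range.mp hl); omega
    rw [h, pow_succ]; ring
  rw [← h1,
    Finset.sum_range_succ' (fun l => (((n+1)).choose l : ℝ) * u l * k ^ (n + 1 - l)),
    Finset.sum_range_succ' (fun l => ((n).choose l : ℝ) * u l * k ^ (n + 1 - l))]
  simp only [Nat.choose_succ_succ, Nat.succ_sub_succ, Nat.cast_add, Nat.choose_zero_right,
    Nat.cast_one, Nat.succ_eq_add_one, add_mul, Finset.sum_add_distrib]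
  ring

private lemma expLeibniz {f : ℝ → ℝ} {s : Set ℝ} (hs : IsOpen s)
    (hf : ContDiffOn ℝ ⊤ f s) (k : ℝ) :
    ∀ n, ∀ x ∈ s, iteratedDeriv n (fun y => f y * Real.exp (y * k)) x
      = (∑ l ∈ range (n + 1), (n.choose l : ℝ) * iteratedDeriv l f x * k ^ (n - l))
          * Real.exp (x * k) := by
  intro n
  induction n with
  | zero => intro x hx; simp
  | succ n ih =>
    intro x hx
    rw [iteratedDeriv_succ]
    have hev : iteratedDeriv n (fun y => f y * Real.exp (y * k))
        =ᶠ[𝓝 x] fun y =>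
          (∑ l ∈ range (n + 1), (n.choose l : ℝ) * iteratedDeriv l f y * k ^ (n - l))
            * Real.exp (y * k) := by
      filter_upwards [hs.mem_nhds hx] with y hy using ih y hy
    rw [hev.deriv_eq]
    have hS : HasDerivAt (fun y =>
        ∑ l ∈ range (n + 1), (n.choose l : ℝ) * iteratedDeriv l f y * k ^ (n - l))
        (∑ l ∈ range (n + 1), (n.choose l : ℝ) * iteratedDeriv (l + 1) f x * k ^ (n - l)) x := by
      refine HasDerivAt.fun_sum fun l _ => ?_
      have hd : HasDerivAt (iteratedDeriv l f) (iteratedDeriv (l + 1) f x) x := by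
        have := (iterDiffAt hs hf l hx).hasDerivAt
        rwa [iteratedDeriv_succ]
      simpa [mul_comm, mul_assoc, mul_left_comm] using (hd.const_mul ((n.choose l : ℝ))).mul_const (k ^ (n - l))
    have hE : HasDerivAt (fun y => Real.exp (y * k)) (Real.exp (x * k) * k) x := by
      simpa using (HasDerivAt.exp ((hasDerivAt_id x).mul_const k))
    have := (hS.fun_mul hE).deriv
    rw [this]
    rw [pascal_sum k (fun l => iteratedDeriv l f x) n]
    ring

private lemma constAdd {f : ℝ → ℝ} {s : Set ℝ} (hs : IsOpen s)
    (hf : ContDiffOn ℝ ⊤ f s) (c t : ℝ) :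
    ∀ n, ∀ x ∈ s, iteratedDeriv n (fun y => c + t * f y) x
      = (if n = 0 then c else 0) + t * iteratedDeriv n f x := by
  intro n
  induction n with
  | zero => intro x hx; simp
  | succ n ih =>
    intro x hx
    rw [iteratedDeriv_succ]
    have hev : iteratedDeriv n (fun y => c + t * f y)
        =ᶠ[𝓝 x] fun y => (if n = 0 then c else 0) + t * iteratedDeriv n f y := by
      filter_upwards [hs.mem_nhds hx] with y hy using ih y hy
    rw [hev.deriv_eq, deriv_const_add, deriv_const_mul _ (iterDiffAt hs hf n hx),
      ← iteratedDeriv_succ]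
    simp

theorem eulerian_recurrence (t : ℝ) (ht : t ≠ 1)
    (A : ℕ → ℝ)
    (hA : ∀ n, A n = iteratedDeriv n (fun x : ℝ => (1 - t) / (Real.exp (x * (t - 1)) - t)) 0) :
    ∀ n : ℕ,
      (∑ l ∈ Finset.range (n + 1), (n.choose l : ℝ) * A l * (t - 1) ^ (n - l)) - t * A n =
        if n = 0 then 1 - t else 0 := by
  set f : ℝ → ℝ := fun x => (1 - t) / (Real.exp (x * (t - 1)) - t) with hfdef
  set s : Set ℝ := {x | Real.exp (x * (t - 1)) - t ≠ 0} with hsdef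
  have hcont : Continuous fun x : ℝ => Real.exp (x * (t - 1)) - t := by continuity
  have hs : IsOpen s := isOpen_compl_singleton.preimage hcont
  have h0 : (0 : ℝ) ∈ s := by
    simp only [hsdef, Set.mem_setOf_eq, zero_mul, Real.exp_zero]
    exact sub_ne_zero.mpr (Ne.symm ht)
  have hf : ContDiffOn ℝ ⊤ f s := by
    apply ContDiffOn.div contDiffOn_const
    · exact (((Real.contDiff_exp).comp (contDiff_id.mul contDiff_const)).sub
        contDiff_const).contDiffOn
    · exact fun x hx => hx
  have hkey : ∀ y ∈ s, f y * Real.exp (y * (t - 1)) = (1 - t) + t * f y := by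
    intro y hy
    have hy' : Real.exp (y * (t - 1)) - t ≠ 0 := hy
    rw [hfdef]
    field_simp
    ring
  intro n
  have hL := expLeibniz hs hf (t - 1) n 0 h0
  rw [zero_mul, Real.exp_zero, mul_one] at hL
  have hev : (fun y => f y * Real.exp (y * (t - 1))) =ᶠ[𝓝 (0 : ℝ)]
      fun y => (1 - t) + t * f y := by
    filter_upwards [hs.mem_nhds h0] with y hy using hkey y hy
  have h2 : iteratedDeriv n (fun y => f y * Real.exp (y * (t - 1))) 0
      = (if n = 0 then 1 - t else 0) + t * iteratedDeriv n f 0 := by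
    rw [hev.iteratedDeriv_eq n]
    exact constAdd hs hf (1 - t) t n 0 h0
  have hAf : ∀ l, A l = iteratedDeriv l f 0 := hA
  rw [h2] at hL
  simp only [hAf]
  linarith [hL]
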